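/- Fix M > 0 and underage/overage costs c_u, c_o > 0. Let μ and ν be Borel probability measures on [0,M], and let x_ν ∈ [0,M] satisfy C(x_ν,ν) = opt(ν). Then: (i) C(x_ν,μ) − opt(μ) ≤ 2·max(c_u,c_o)·d_W(μ,ν); (ii) C(x_ν,μ) − opt(μ) ≤ 2·max(c_u,c_o)·M·d_K(μ,ν). -/

import Mathlib

open MeasureTheory

noncomputable section

/-- Cumulative distribution function `F(t) = μ([0,t])`. -/
def cdf0 (μ : Measure ℝ) (t : ℝ) : ℝ := (μ (Set.Icc 0 t)).toReal

/-- Wasserstein-1 distance between measures on `[0,M]`: `∫₀^M |F(t) - H(t)| dt`. -/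
def wassDist (M : ℝ) (μ ν : Measure ℝ) : ℝ :=
  ∫ t in Set.Icc (0:ℝ) M, |cdf0 μ t - cdf0 ν t|

/-- Kolmogorov distance: `sup_{t ∈ ℝ} |F(t) - H(t)|`. -/
def kolDist (μ ν : Measure ℝ) : ℝ := ⨆ t : ℝ, |cdf0 μ t - cdf0 ν t|

/-- Expected newsvendor cost with underage cost `cu` and overage cost `co`. -/
def nvCost (cu co x : ℝ) (μ : Measure ℝ) : ℝ :=
  ∫ ξ, (cu * max (ξ - x) 0 + co * max (x - ξ) 0) ∂μ

/-- Optimal newsvendor cost `opt(μ) = inf_{x ∈ [0,M]} C(x,μ)`. -/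
def optNv (cu co M : ℝ) (μ : Measure ℝ) : ℝ :=
  ⨅ x : Set.Icc (0:ℝ) M, nvCost cu co x.1 μ

section Aux

lemma cdf0_nonneg (μ : Measure ℝ) (s : ℝ) : 0 ≤ cdf0 μ s := ENNReal.toReal_nonneg

lemma cdf0_le_one (μ : Measure ℝ) [IsProbabilityMeasure μ] (s : ℝ) : cdf0 μ s ≤ 1 := by
  have h : (μ (Set.Icc 0 s)).toReal ≤ (1 : ENNReal).toReal :=
    ENNReal.toReal_mono ENNReal.one_ne_top prob_le_one
  simpa [cdf0] using h

lemma cdf0_mono (μ : Measure ℝ) [IsProbabilityMeasure μ] : Monotone (cdf0 μ) := by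
  intro a b hab
  exact ENNReal.toReal_mono (measure_ne_top μ _) (measure_mono (Set.Icc_subset_Icc_right hab))

lemma cdf0_measurable (μ : Measure ℝ) [IsProbabilityMeasure μ] : Measurable (cdf0 μ) :=
  (cdf0_mono μ).measurable

lemma compl_null {M : ℝ} (μ : Measure ℝ) [IsProbabilityMeasure μ]
    (hμ : μ (Set.Icc 0 M) = 1) : μ (Set.Icc 0 M)ᶜ = 0 := by
  have h := measure_compl (measurableSet_Icc (a := (0:ℝ)) (b := M)) (measure_ne_top μ _)
  rw [h, hμ, measure_univ, tsub_self]

lemma cdf0_of_neg (μ : Measure ℝ) {s : ℝ} (hs : s < 0) : cdf0 μ s = 0 := by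
  rw [cdf0, Set.Icc_eq_empty (by linarith : ¬ (0:ℝ) ≤ s), measure_empty]
  simp

lemma cdf0_of_ge {M : ℝ} (μ : Measure ℝ) [IsProbabilityMeasure μ]
    (hμ : μ (Set.Icc 0 M) = 1) {s : ℝ} (hs : M ≤ s) : cdf0 μ s = 1 := by
  have h1 : μ (Set.Icc 0 s) ≤ 1 := prob_le_one
  have h2 : (1 : ENNReal) ≤ μ (Set.Icc 0 s) := by
    rw [← hμ]; exact measure_mono (Set.Icc_subset_Icc_right hs)
  rw [cdf0, le_antisymm h1 h2]; simp

lemma Iic_toReal {M : ℝ} (μ : Measure ℝ) [IsProbabilityMeasure μ]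
    (hμ : μ (Set.Icc 0 M) = 1) (s : ℝ) : (μ (Set.Iic s)).toReal = cdf0 μ s := by
  have hIio : μ (Set.Iio 0) = 0 := by
    refine measure_mono_null ?_ (compl_null μ hμ)
    intro a ha
    simp only [Set.mem_compl_iff, Set.mem_Icc, not_and]
    intro h0; exact absurd h0 (not_le.mpr ha)
  rcases lt_or_ge s 0 with hs | hs
  · have h0 : μ (Set.Iic s) = 0 :=
      measure_mono_null (fun a ha => lt_of_le_of_lt ha hs) hIio
    rw [h0, cdf0_of_neg μ hs]; simp
  · have heq : μ (Set.Iic s) = μ (Set.Icc 0 s) := by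
      apply le_antisymm
      · calc μ (Set.Iic s) ≤ μ (Set.Iio 0 ∪ Set.Icc 0 s) := by
              apply measure_mono
              intro a ha
              rcases lt_or_ge a 0 with h | h
              · exact Or.inl h
              · exact Or.inr ⟨h, ha⟩
          _ ≤ μ (Set.Iio 0) + μ (Set.Icc 0 s) := measure_union_le _ _
          _ = μ (Set.Icc 0 s) := by rw [hIio, zero_add]
      · exact measure_mono (fun a ha => ha.2)
    rw [cdf0, heq]

lemma Ioi_toReal {M : ℝ} (μ : Measure ℝ) [IsProbabilityMeasure μ]
    (hμ : μ (Set.Icc 0 M) = 1) (s : ℝ) : (μ (Set.Ioi s)).toReal = 1 - cdf0 μ s := by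
  have hc : Set.Ioi s = (Set.Iic s)ᶜ := (Set.compl_Iic).symm
  rw [hc, measure_compl measurableSet_Iic (measure_ne_top μ _), measure_univ,
    ENNReal.toReal_sub_of_le prob_le_one ENNReal.one_ne_top, Iic_toReal μ hμ]
  simp

lemma ae_mem_Icc {M : ℝ} (μ : Measure ℝ) [IsProbabilityMeasure μ]
    (hμ : μ (Set.Icc 0 M) = 1) : ∀ᵐ ξ ∂μ, ξ ∈ Set.Icc (0:ℝ) M := by
  rw [ae_iff]
  exact compl_null μ hμ

lemma integrable_maxA {M x : ℝ} (hx0 : 0 ≤ x) (hxM : x ≤ M)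
    (μ : Measure ℝ) [IsProbabilityMeasure μ] (hμ : μ (Set.Icc 0 M) = 1) :
    Integrable (fun ξ => max (ξ - x) 0) μ := by
  have hM0 : (0:ℝ) ≤ M := le_trans hx0 hxM
  refine Integrable.mono' (integrable_const M)
    ((continuous_id.sub continuous_const).max continuous_const).aestronglyMeasurable ?_
  filter_upwards [ae_mem_Icc μ hμ] with ξ hξ
  rw [Real.norm_eq_abs, abs_of_nonneg (le_max_right _ _)]
  exact max_le (by linarith [hξ.2]) hM0

lemma integrable_maxB {M x : ℝ} (hx0 : 0 ≤ x) (hxM : x ≤ M)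
    (μ : Measure ℝ) [IsProbabilityMeasure μ] (hμ : μ (Set.Icc 0 M) = 1) :
    Integrable (fun ξ => max (x - ξ) 0) μ := by
  have hM0 : (0:ℝ) ≤ M := le_trans hx0 hxM
  refine Integrable.mono' (integrable_const M)
    ((continuous_const.sub continuous_id).max continuous_const).aestronglyMeasurable ?_
  filter_upwards [ae_mem_Icc μ hμ] with ξ hξ
  rw [Real.norm_eq_abs, abs_of_nonneg (le_max_right _ _)]
  exact max_le (by linarith [hξ.1]) hM0

lemma A_eq {M x : ℝ} (hx0 : 0 ≤ x) (hxM : x ≤ M)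
    (μ : Measure ℝ) [IsProbabilityMeasure μ] (hμ : μ (Set.Icc 0 M) = 1) :
    ∫ ξ, max (ξ - x) 0 ∂μ = ∫ t in Set.Ioi (0:ℝ), (1 - cdf0 μ (x + t)) := by
  rw [(integrable_maxA hx0 hxM μ hμ).integral_eq_integral_meas_lt
    (Filter.Eventually.of_forall fun ξ => le_max_right _ _)]
  refine setIntegral_congr_fun measurableSet_Ioi (fun t ht => ?_)
  have ht0 : (0:ℝ) < t := ht
  have hset : {a : ℝ | t < max (a - x) 0} = Set.Ioi (x + t) := by
    ext a
    simp only [Set.mem_setOf_eq, lt_max_iff, Set.mem_Ioi]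
    constructor
    · rintro (h | h)
      · linarith
      · linarith
    · intro h; left; linarith
  rw [hset, measureReal_def, Ioi_toReal μ hμ]

lemma B_eq {M x : ℝ} (hx0 : 0 ≤ x) (hxM : x ≤ M)
    (μ : Measure ℝ) [IsProbabilityMeasure μ] (hμ : μ (Set.Icc 0 M) = 1) :
    ∫ ξ, max (x - ξ) 0 ∂μ = ∫ t in Set.Ioi (0:ℝ), cdf0 μ (x - t) := by
  rw [(integrable_maxB hx0 hxM μ hμ).integral_eq_integral_meas_le
    (Filter.Eventually.of_forall fun ξ => le_max_right _ _)]
  refine setIntegral_congr_fun measurableSet_Ioi (fun t ht => ?_)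
  have ht0 : (0:ℝ) < t := ht
  have hset : {a : ℝ | t ≤ max (x - a) 0} = Set.Iic (x - t) := by
    ext a
    simp only [Set.mem_setOf_eq, le_max_iff, Set.mem_Iic]
    constructor
    · rintro (h | h)
      · linarith
      · linarith
    · intro h; left; linarith
  rw [hset, measureReal_def, Iic_toReal μ hμ]

lemma indic_integrable {M : ℝ} (hM0 : (0:ℝ) ≤ M) :
    Integrable ((Set.Ioc (0:ℝ) M).indicator (fun _ => (1:ℝ)))
      (volume.restrict (Set.Ioi (0:ℝ))) := by
  refine Integrable.restrict ?_
  rw [integrable_indicator_iff measurableSet_Ioc]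
  exact (integrableOn_const_iff).mpr (Or.inr measure_Ioc_lt_top)

lemma intA {M x : ℝ} (hx0 : 0 ≤ x) (hxM : x ≤ M)
    (μ : Measure ℝ) [IsProbabilityMeasure μ] (hμ : μ (Set.Icc 0 M) = 1) :
    IntegrableOn (fun t => 1 - cdf0 μ (x + t)) (Set.Ioi (0:ℝ)) := by
  have hM0 : (0:ℝ) ≤ M := le_trans hx0 hxM
  refine Integrable.mono' (indic_integrable hM0)
    ((measurable_const.sub ((cdf0_measurable μ).comp (measurable_const_add x))).aestronglyMeasurable) ?_
  rw [ae_restrict_iff' measurableSet_Ioi]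
  refine Filter.Eventually.of_forall (fun t ht => ?_)
  by_cases hMt : t ≤ M
  · rw [Set.indicator_of_mem (Set.mem_Ioc.mpr ⟨ht, hMt⟩), Real.norm_eq_abs]
    have h1 := cdf0_le_one μ (x + t)
    have h2 := cdf0_nonneg μ (x + t)
    rw [abs_le]; constructor <;> linarith
  · rw [Set.indicator_of_notMem (fun h => hMt h.2)]
    have : cdf0 μ (x + t) = 1 := cdf0_of_ge μ hμ (by push_neg at hMt; linarith)
    simp [this]

lemma intB {M x : ℝ} (hx0 : 0 ≤ x) (hxM : x ≤ M)
    (μ : Measure ℝ) [IsProbabilityMeasure μ] (hμ : μ (Set.Icc 0 M) = 1) :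
    IntegrableOn (fun t => cdf0 μ (x - t)) (Set.Ioi (0:ℝ)) := by
  have hM0 : (0:ℝ) ≤ M := le_trans hx0 hxM
  refine Integrable.mono' (indic_integrable hM0)
    (((cdf0_measurable μ).comp (measurable_const_sub x)).aestronglyMeasurable) ?_
  rw [ae_restrict_iff' measurableSet_Ioi]
  refine Filter.Eventually.of_forall (fun t ht => ?_)
  by_cases hMt : t ≤ M
  · rw [Set.indicator_of_mem (Set.mem_Ioc.mpr ⟨ht, hMt⟩), Real.norm_eq_abs]
    have h1 := cdf0_le_one μ (x - t)
    have h2 := cdf0_nonneg μ (x - t)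
    rw [abs_le]; constructor <;> linarith
  · rw [Set.indicator_of_notMem (fun h => hMt h.2)]
    push_neg at hMt
    have : cdf0 μ (x - t) = 0 := cdf0_of_neg μ (by linarith)
    simp [this]

lemma nvCost_eq {M x : ℝ} (cu co : ℝ) (hx0 : 0 ≤ x) (hxM : x ≤ M)
    (μ : Measure ℝ) [IsProbabilityMeasure μ] (hμ : μ (Set.Icc 0 M) = 1) :
    nvCost cu co x μ =
      cu * ∫ ξ, max (ξ - x) 0 ∂μ + co * ∫ ξ, max (x - ξ) 0 ∂μ := by
  rw [nvCost, integral_add ((integrable_maxA hx0 hxM μ hμ).const_mul cu)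
      ((integrable_maxB hx0 hxM μ hμ).const_mul co),
    integral_const_mul, integral_const_mul]

lemma Edist_intervalIntegrable (μ ν : Measure ℝ) [IsProbabilityMeasure μ]
    [IsProbabilityMeasure ν] (a b : ℝ) :
    IntervalIntegrable (fun s => |cdf0 μ s - cdf0 ν s|) volume a b := by
  rw [intervalIntegrable_iff]
  refine Integrable.mono' (g := fun _ => (2:ℝ))
    ((integrableOn_const_iff).mpr (Or.inr measure_Ioc_lt_top))
    (((cdf0_measurable μ).sub (cdf0_measurable ν)).abs.aestronglyMeasurable.restrict) ?_
  refine Filter.Eventually.of_forall (fun t => ?_)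
  show ‖|cdf0 μ t - cdf0 ν t|‖ ≤ (2:ℝ)
  rw [Real.norm_eq_abs, abs_abs, abs_le]
  have h1 := cdf0_le_one μ t
  have h2 := cdf0_nonneg μ t
  have h3 := cdf0_le_one ν t
  have h4 := cdf0_nonneg ν t
  exact ⟨by linarith, by linarith⟩

/-- Key one-point comparison: the newsvendor costs under two distributions differ by
at most `max cu co` times the Wasserstein distance. -/
lemma nv_diff_le (M cu co : ℝ) (hM : 0 < M) (hcu : 0 < cu) (hco : 0 < co)
    (μ ν : Measure ℝ) [IsProbabilityMeasure μ] [IsProbabilityMeasure ν]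
    (hμ : μ (Set.Icc 0 M) = 1) (hν : ν (Set.Icc 0 M) = 1)
    (x : ℝ) (hx : x ∈ Set.Icc (0:ℝ) M) :
    |nvCost cu co x μ - nvCost cu co x ν| ≤ max cu co * wassDist M μ ν := by
  obtain ⟨hx0, hxM⟩ := hx
  set E : ℝ → ℝ := fun s => |cdf0 μ s - cdf0 ν s| with hE
  -- A difference bound
  have hAdiff : |(∫ ξ, max (ξ - x) 0 ∂μ) - ∫ ξ, max (ξ - x) 0 ∂ν| ≤ ∫ s in x..M, E s := by
    rw [A_eq hx0 hxM μ hμ, A_eq hx0 hxM ν hν,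
      ← integral_sub (intA hx0 hxM μ hμ) (intA hx0 hxM ν hν)]
    have step1 : |∫ t in Set.Ioi (0:ℝ), ((1 - cdf0 μ (x + t)) - (1 - cdf0 ν (x + t)))| ≤
        ∫ t in Set.Ioi (0:ℝ), E (x + t) := by
      calc |∫ t in Set.Ioi (0:ℝ), ((1 - cdf0 μ (x + t)) - (1 - cdf0 ν (x + t)))|
          = ‖∫ t in Set.Ioi (0:ℝ), ((1 - cdf0 μ (x + t)) - (1 - cdf0 ν (x + t)))‖ :=
            (Real.norm_eq_abs _).symm
        _ ≤ ∫ t in Set.Ioi (0:ℝ), ‖(1 - cdf0 μ (x + t)) - (1 - cdf0 ν (x + t))‖ :=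
            norm_integral_le_integral_norm _
        _ = ∫ t in Set.Ioi (0:ℝ), E (x + t) := by
            refine integral_congr_ae (Filter.Eventually.of_forall (fun t => ?_))
            rw [hE]
            simp only [Real.norm_eq_abs]
            rw [show (1 - cdf0 μ (x + t)) - (1 - cdf0 ν (x + t)) =
              -(cdf0 μ (x+t) - cdf0 ν (x+t)) by ring, abs_neg]
    refine step1.trans ?_
    have step2 : ∫ t in Set.Ioi (0:ℝ), E (x + t) = ∫ t in Set.Ioc (0:ℝ) (M - x), E (x + t) := by
      refine setIntegral_eq_of_subset_of_ae_diff_eq_zero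
        nullMeasurableSet_Ioi Set.Ioc_subset_Ioi_self ?_
      refine Filter.Eventually.of_forall (fun t ht => ?_)
      have h1 : M - x < t := by
        by_contra hcon
        push_neg at hcon
        exact ht.2 ⟨ht.1, hcon⟩
      have hMle : M ≤ x + t := by linarith
      rw [hE]
      simp only
      rw [cdf0_of_ge μ hμ hMle, cdf0_of_ge ν hν hMle, sub_self, abs_zero]
    rw [step2, ← intervalIntegral.integral_of_le (by linarith : (0:ℝ) ≤ M - x)]
    have step3 : (∫ t in (0:ℝ)..(M - x), E (x + t)) = ∫ s in x..M, E s := by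
      rw [intervalIntegral.integral_comp_add_left E x]
      norm_num
    rw [step3]
  -- B difference bound
  have hBdiff : |(∫ ξ, max (x - ξ) 0 ∂μ) - ∫ ξ, max (x - ξ) 0 ∂ν| ≤ ∫ s in (0:ℝ)..x, E s := by
    rw [B_eq hx0 hxM μ hμ, B_eq hx0 hxM ν hν,
      ← integral_sub (intB hx0 hxM μ hμ) (intB hx0 hxM ν hν)]
    have step1 : |∫ t in Set.Ioi (0:ℝ), (cdf0 μ (x - t) - cdf0 ν (x - t))| ≤
        ∫ t in Set.Ioi (0:ℝ), E (x - t) := by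
      calc |∫ t in Set.Ioi (0:ℝ), (cdf0 μ (x - t) - cdf0 ν (x - t))|
          = ‖∫ t in Set.Ioi (0:ℝ), (cdf0 μ (x - t) - cdf0 ν (x - t))‖ :=
            (Real.norm_eq_abs _).symm
        _ ≤ ∫ t in Set.Ioi (0:ℝ), ‖cdf0 μ (x - t) - cdf0 ν (x - t)‖ :=
            norm_integral_le_integral_norm _
        _ = ∫ t in Set.Ioi (0:ℝ), E (x - t) := by
            refine integral_congr_ae (Filter.Eventually.of_forall (fun t => ?_))
            rw [hE]
            simp only [Real.norm_eq_abs]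
    refine step1.trans ?_
    have step2 : ∫ t in Set.Ioi (0:ℝ), E (x - t) = ∫ t in Set.Ioc (0:ℝ) x, E (x - t) := by
      refine setIntegral_eq_of_subset_of_ae_diff_eq_zero
        nullMeasurableSet_Ioi Set.Ioc_subset_Ioi_self ?_
      refine Filter.Eventually.of_forall (fun t ht => ?_)
      have h1 : x < t := by
        by_contra hcon
        push_neg at hcon
        exact ht.2 ⟨ht.1, hcon⟩
      rw [hE]
      simp only
      rw [cdf0_of_neg μ (by linarith), cdf0_of_neg ν (by linarith), sub_self, abs_zero]
    rw [step2, ← intervalIntegral.integral_of_le hx0]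
    have step3 : (∫ t in (0:ℝ)..x, E (x - t)) = ∫ s in (0:ℝ)..x, E s := by
      rw [intervalIntegral.integral_comp_sub_left E x]
      norm_num
    rw [step3]
  -- combine
  have hsum : (∫ s in (0:ℝ)..x, E s) + (∫ s in x..M, E s) = ∫ s in (0:ℝ)..M, E s :=
    intervalIntegral.integral_add_adjacent_intervals
      (Edist_intervalIntegrable μ ν 0 x) (Edist_intervalIntegrable μ ν x M)
  have hW : wassDist M μ ν = ∫ s in (0:ℝ)..M, E s := by
    rw [wassDist, MeasureTheory.integral_Icc_eq_integral_Ioc,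
      ← intervalIntegral.integral_of_le hM.le]
  have hmax0 : 0 ≤ max cu co := le_trans hcu.le (le_max_left _ _)
  have hcum : cu ≤ max cu co := le_max_left _ _
  have hcom : co ≤ max cu co := le_max_right _ _
  rw [nvCost_eq cu co hx0 hxM μ hμ, nvCost_eq cu co hx0 hxM ν hν]
  have hkey : ∀ a b c d : ℝ, cu * a + co * b - (cu * c + co * d) =
      cu * (a - c) + co * (b - d) := by intros; ring
  rw [hkey]
  calc |cu * ((∫ ξ, max (ξ - x) 0 ∂μ) - ∫ ξ, max (ξ - x) 0 ∂ν) +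
        co * ((∫ ξ, max (x - ξ) 0 ∂μ) - ∫ ξ, max (x - ξ) 0 ∂ν)|
      ≤ cu * |(∫ ξ, max (ξ - x) 0 ∂μ) - ∫ ξ, max (ξ - x) 0 ∂ν| +
        co * |(∫ ξ, max (x - ξ) 0 ∂μ) - ∫ ξ, max (x - ξ) 0 ∂ν| := by
        refine (abs_add_le _ _).trans ?_
        rw [abs_mul, abs_mul, abs_of_pos hcu, abs_of_pos hco]
    _ ≤ max cu co * (∫ s in x..M, E s) + max cu co * (∫ s in (0:ℝ)..x, E s) := by
        have h1 : cu * |(∫ ξ, max (ξ - x) 0 ∂μ) - ∫ ξ, max (ξ - x) 0 ∂ν| ≤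
            max cu co * (∫ s in x..M, E s) :=
          mul_le_mul hcum hAdiff (abs_nonneg _) hmax0
        have h2 : co * |(∫ ξ, max (x - ξ) 0 ∂μ) - ∫ ξ, max (x - ξ) 0 ∂ν| ≤
            max cu co * (∫ s in (0:ℝ)..x, E s) :=
          mul_le_mul hcom hBdiff (abs_nonneg _) hmax0
        linarith
    _ = max cu co * wassDist M μ ν := by rw [hW, ← hsum]; ring

lemma nvCost_nonneg (cu co x : ℝ) (hcu : 0 ≤ cu) (hco : 0 ≤ co) (μ : Measure ℝ) :
    0 ≤ nvCost cu co x μ :=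
  integral_nonneg (fun ξ => add_nonneg (mul_nonneg hcu (le_max_right _ _))
    (mul_nonneg hco (le_max_right _ _)))

end Aux

/-- SAA regret bounds for the newsvendor problem under Wasserstein and Kolmogorov
heterogeneity. -/
theorem newsvendor_SAA_regret
    (M cu co : ℝ) (hM : 0 < M) (hcu : 0 < cu) (hco : 0 < co)
    (μ ν : Measure ℝ) [IsProbabilityMeasure μ] [IsProbabilityMeasure ν]
    (hμ : μ (Set.Icc 0 M) = 1) (hν : ν (Set.Icc 0 M) = 1)
    (xν : ℝ) (hmem : xν ∈ Set.Icc (0:ℝ) M)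
    (hxν : nvCost cu co xν ν = optNv cu co M ν) :
    nvCost cu co xν μ - optNv cu co M μ ≤ 2 * max cu co * wassDist M μ ν ∧
    nvCost cu co xν μ - optNv cu co M μ ≤ 2 * max cu co * M * kolDist μ ν := by
  have hmax0 : 0 ≤ max cu co := le_trans hcu.le (le_max_left _ _)
  set L : ℝ := max cu co * wassDist M μ ν with hL
  have key : ∀ x ∈ Set.Icc (0:ℝ) M, |nvCost cu co x μ - nvCost cu co x ν| ≤ L :=
    fun x hx => nv_diff_le M cu co hM hcu hco μ ν hμ hν x hx
  haveI hne : Nonempty (Set.Icc (0:ℝ) M) := ⟨⟨0, le_refl 0, hM.le⟩⟩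
  have hbddν : BddBelow (Set.range fun y : Set.Icc (0:ℝ) M => nvCost cu co y.1 ν) := by
    refine ⟨0, ?_⟩
    rintro r ⟨y, rfl⟩
    exact nvCost_nonneg cu co y.1 hcu.le hco.le ν
  -- optNv ν - L ≤ optNv μ
  have hopt : optNv cu co M ν - L ≤ optNv cu co M μ := by
    rw [optNv]
    refine le_ciInf (fun y => ?_)
    show optNv cu co M ν - L ≤ nvCost cu co y.1 μ
    have h1 : optNv cu co M ν ≤ nvCost cu co y.1 ν := ciInf_le hbddν y
    have h2 := (abs_le.mp (key y.1 y.2)).1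
    linarith
  have hx1 := (abs_le.mp (key xν hmem)).2
  have main : nvCost cu co xν μ - optNv cu co M μ ≤ 2 * L := by
    have := hxν
    linarith
  constructor
  · calc nvCost cu co xν μ - optNv cu co M μ ≤ 2 * L := main
      _ = 2 * max cu co * wassDist M μ ν := by rw [hL]; ring
  · -- Wasserstein ≤ M * Kolmogorov
    have hbddE : BddAbove (Set.range fun t : ℝ => |cdf0 μ t - cdf0 ν t|) := by
      refine ⟨2, ?_⟩
      rintro r ⟨t, rfl⟩
      have h1 := cdf0_le_one μ t
      have h2 := cdf0_nonneg μ t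
      have h3 := cdf0_le_one ν t
      have h4 := cdf0_nonneg ν t
      rw [abs_le]; constructor <;> linarith
    have hWK : wassDist M μ ν ≤ M * kolDist μ ν := by
      have hEleq : ∀ t ∈ Set.Icc (0:ℝ) M, |cdf0 μ t - cdf0 ν t| ≤ kolDist μ ν :=
        fun t _ => le_ciSup hbddE t
      have hint : IntegrableOn (fun t => |cdf0 μ t - cdf0 ν t|) (Set.Icc (0:ℝ) M) := by
        have h := Edist_intervalIntegrable μ ν 0 M
        rw [intervalIntegrable_iff_integrableOn_Icc_of_le hM.le] at h
        exact h
      have hc : IntegrableOn (fun _ : ℝ => kolDist μ ν) (Set.Icc (0:ℝ) M) :=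
        (integrableOn_const_iff).mpr (Or.inr measure_Icc_lt_top)
      calc wassDist M μ ν ≤ ∫ _ in Set.Icc (0:ℝ) M, kolDist μ ν :=
            setIntegral_mono_on hint hc measurableSet_Icc hEleq
        _ = M * kolDist μ ν := by
            rw [setIntegral_const, measureReal_def, Real.volume_Icc, sub_zero, ENNReal.toReal_ofReal hM.le,
              smul_eq_mul]
    calc nvCost cu co xν μ - optNv cu co M μ ≤ 2 * L := main
      _ = 2 * max cu co * wassDist M μ ν := by rw [hL]; ring
      _ ≤ 2 * max cu co * (M * kolDist μ ν) :=
          mul_le_mul_of_nonneg_left hWK (by positivity)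
      _ = 2 * max cu co * M * kolDist μ ν := by ring

end
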